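/- For every digraph G on n vertices, the minimum quantifier depth of a sentence in the class Λ_{1/2} defining G is at least log* n − log* log* n − 1; equivalently, q_{1/2}(n) ≥ log* n − log* log* n − 1 for all n, where q_{1/2}(n) is the minimum over all digraphs G of order n of this minimum quantifier depth. -/

import Mathlib

namespace PaperFO

/-- First-order formulas in a language with equality `eq` and one binary
relation symbol `rel` (adjacency `~` for graphs, the arc relation `↦` for
digraphs).  Variables are indexed by natural numbers (variable `xᵢ` of the
paper corresponds to `i - 1 : ℕ`). -/
inductive Fml : Type
  | eq : ℕ → ℕ → Fml
  | rel : ℕ → ℕ → Fml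
  | not : Fml → Fml
  | and : Fml → Fml → Fml
  | or : Fml → Fml → Fml
  | all : ℕ → Fml → Fml
  | ex : ℕ → Fml → Fml

namespace Fml

/-- Truth of a formula in the structure `(V, r)` under the assignment `σ`. -/
def eval {V : Type} (r : V → V → Prop) (σ : ℕ → V) : Fml → Prop
  | eq i j => σ i = σ j
  | rel i j => r (σ i) (σ j)
  | not φ => ¬ eval r σ φ
  | and φ ψ => eval r σ φ ∧ eval r σ ψ
  | or φ ψ => eval r σ φ ∨ eval r σ ψ
  | all i φ => ∀ v : V, eval r (Function.update σ i v) φ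
  | ex i φ => ∃ v : V, eval r (Function.update σ i v) φ

/-- The free variables of a formula. -/
def freeVars : Fml → Finset ℕ
  | eq i j => {i, j}
  | rel i j => {i, j}
  | not φ => freeVars φ
  | and φ ψ => freeVars φ ∪ freeVars ψ
  | or φ ψ => freeVars φ ∪ freeVars ψ
  | all i φ => (freeVars φ).erase i
  | ex i φ => (freeVars φ).erase i

/-- A sentence is a formula without free variables. -/
def IsSentence (φ : Fml) : Prop := φ.freeVars = ∅

/-- The quantifier depth (= quantifier rank) of a formula: the maximum
number of nested quantifiers. -/
def depth : Fml → ℕ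
  | eq _ _ => 0
  | rel _ _ => 0
  | not φ => depth φ
  | and φ ψ => max (depth φ) (depth ψ)
  | or φ ψ => max (depth φ) (depth ψ)
  | all _ φ => depth φ + 1
  | ex _ φ => depth φ + 1

/-- A formula is atomic if it is of the form `x = y` or `x ~ y`. -/
def IsAtomic : Fml → Prop
  | eq _ _ => True
  | rel _ _ => True
  | _ => False

/-- Negations occur only in front of atomic subformulas. -/
def NegAtomic : Fml → Prop
  | eq _ _ => True
  | rel _ _ => True
  | not φ => IsAtomic φ
  | and φ ψ => NegAtomic φ ∧ NegAtomic ψ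
  | or φ ψ => NegAtomic φ ∧ NegAtomic ψ
  | all _ φ => NegAtomic φ
  | ex _ φ => NegAtomic φ

/-- The set of maximal sequences of nested quantifiers of a formula,
recorded as lists of Booleans read from the outermost quantifier inwards
(`true` = `∃`, `false` = `∀`).  Every sequence of nested quantifiers of the
formula is a (contiguous) subsequence of one of these. -/
def qstrings : Fml → Set (List Bool)
  | eq _ _ => {[]}
  | rel _ _ => {[]}
  | not φ => qstrings φ
  | and φ ψ => qstrings φ ∪ qstrings ψ
  | or φ ψ => qstrings φ ∪ qstrings ψ
  | all _ φ => (List.cons false) '' qstrings φ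
  | ex _ φ => (List.cons true) '' qstrings φ

end Fml

/-- The number of quantifier alternations (occurrences of `∀∃` or `∃∀`) in a
sequence of nested quantifiers. -/
def altCount : List Bool → ℕ
  | [] => 0
  | [_] => 0
  | a :: b :: l => (if a = b then 0 else 1) + altCount (b :: l)

namespace Fml

/-- Every sequence of nested quantifiers has at most `a` quantifier
alternations. -/
def AltLe (φ : Fml) (a : ℕ) : Prop := ∀ s ∈ φ.qstrings, altCount s ≤ a

/-- An `a`-alternating formula: negations occur only in front of atomic
subformulas and every sequence of nested quantifiers has at most `a`
quantifier alternations. -/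
def AltFml (a : ℕ) (φ : Fml) : Prop := φ.NegAtomic ∧ φ.AltLe a

/-- A 0-alternating formula: negations occur only in front of atomic
subformulas and no sequence of nested quantifiers contains a quantifier
alternation. -/
def ZeroAlt (φ : Fml) : Prop := φ.NegAtomic ∧ φ.AltLe 0

end Fml

/-- `logStar n` is the minimum number of iterations of the binary logarithm
needed to bring `n` to `1` or below. -/
def logStar (n : ℕ) : ℕ :=
  if h : n ≤ 1 then 0 else logStar (Nat.log 2 n) + 1
decreasing_by exact Nat.log_lt_self 2 (by omega)

/-- The tower function: `tower 0 = 1`, `tower (i+1) = 2 ^ tower i`. -/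
def tower : ℕ → ℕ
  | 0 => 1
  | i + 1 => 2 ^ tower i

end PaperFO

namespace PaperFO

/-- A sentence is true on the digraph `(V, r)` (digraphs interpret `Fml.rel`
as the arc relation `↦`). -/
def DModels {V : Type} (r : V → V → Prop) (φ : Fml) : Prop :=
  ∀ σ : ℕ → V, φ.eval r σ

/-- Isomorphism of digraphs. -/
def DIso {V W : Type} (r : V → V → Prop) (r' : W → W → Prop) : Prop :=
  ∃ e : V ≃ W, ∀ a b : V, r a b ↔ r' (e a) (e b)

/-- The sentence `φ` defines the digraph `(V, r)`: it is a sentence, it is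
true on `(V, r)`, and it fails on every (finite, nonempty) digraph not
isomorphic to `(V, r)`. -/
def DDefines {V : Type} (r : V → V → Prop) (φ : Fml) : Prop :=
  φ.IsSentence ∧ DModels r φ ∧
    ∀ (W : Type) (_ : Fintype W) (_ : Nonempty W) (r' : W → W → Prop),
      ¬ DIso r r' → ¬ DModels r' φ

end PaperFO

namespace PaperFO
namespace Fml

/-- The length of a formula: the total number of symbols (an atomic formula
`x = y` or `x ~ y` contributes `3` symbols, a negation `1`, a binary
connective `1`, and a quantifier together with its variable `2`). -/
def len : Fml → ℕ
  | eq _ _ => 3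
  | rel _ _ => 3
  | not φ => len φ + 1
  | and φ ψ => len φ + len ψ + 1
  | or φ ψ => len φ + len ψ + 1
  | all _ φ => len φ + 2
  | ex _ φ => len φ + 2

/-- The number of occurrences of the existential quantifier. -/
def exCount : Fml → ℕ
  | eq _ _ => 0
  | rel _ _ => 0
  | not φ => exCount φ
  | and φ ψ => exCount φ + exCount ψ
  | or φ ψ => exCount φ + exCount ψ
  | all _ φ => exCount φ
  | ex _ φ => exCount φ + 1

/-- The total number of quantifier occurrences. -/
def qCount : Fml → ℕ
  | eq _ _ => 0
  | rel _ _ => 0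
  | not φ => qCount φ
  | and φ ψ => qCount φ + qCount ψ
  | or φ ψ => qCount φ + qCount ψ
  | all _ φ => qCount φ + 1
  | ex _ φ => qCount φ + 1

/-- Implication `A ⇒ B`, a shorthand for `(¬ A) ∨ B`. -/
def imp (A B : Fml) : Fml := .or (.not A) B

end Fml
end PaperFO

namespace PaperFO

/-- The sentence `A` is an `F`-description of the digraph `(V, r)`:
`(V,r) ⊨ A` and, for every `B ∈ F` with `(V,r) ⊨ B`, the implication
`A ⇒ B` is true on every (finite, nonempty) digraph. -/
def FDescr (F : Set Fml) {V : Type} (r : V → V → Prop) (A : Fml) : Prop :=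
  DModels r A ∧
    ∀ B ∈ F, DModels r B →
      ∀ (W : Type) (_ : Fintype W) (_ : Nonempty W) (r' : W → W → Prop),
        DModels r' (A.imp B)

/-- `G, ū ⊨ A(x_1,…,x_s)` : the formula `A`, whose free variables are among
`x_1, …, x_s`, is true on the digraph `(V, r)` with each `xᵢ` assigned `u i`. -/
def DModelsT {V : Type} (r : V → V → Prop) {s : ℕ} (u : Fin s → V) (A : Fml) : Prop :=
  ∀ σ : ℕ → V, (∀ i : Fin s, σ i.1 = u i) → A.eval r σ

/-- `G, ū ≡ H, v̄ (mod F)` : for every formula `A ∈ F`, `G, ū ⊨ A` exactly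
when `H, v̄ ⊨ A`. -/
def EquivModT (F : Set Fml) {s : ℕ} {V W : Type}
    (r : V → V → Prop) (u : Fin s → V) (r' : W → W → Prop) (v : Fin s → W) : Prop :=
  ∀ A ∈ F, (DModelsT r u A ↔ DModelsT r' v A)

/-- The formula `A(x_1,…,x_s)` is an `F`-description of `(G, ū)`:
`G, ū ⊨ A` and, for every `B ∈ F` with `G, ū ⊨ B`, the implication `A ⇒ B`
is true on all (finite, nonempty) digraphs with `s` designated vertices. -/
def FDescrT (F : Set Fml) {V : Type} (r : V → V → Prop) {s : ℕ} (u : Fin s → V)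
    (A : Fml) : Prop :=
  DModelsT r u A ∧
    ∀ B ∈ F, DModelsT r u B →
      ∀ (W : Type) (_ : Fintype W) (_ : Nonempty W) (r' : W → W → Prop) (v : Fin s → W),
        DModelsT r' v (A.imp B)

/-- The class `Λ_{1/2}`: formulas with negations only in front of atomic
subformulas such that every sequence of nested quantifiers either has no
quantifier alternation, or has at most one alternation and starts with `∃`. -/
def Lambda12 (φ : Fml) : Prop :=
  φ.NegAtomic ∧
    ∀ s ∈ φ.qstrings, altCount s = 0 ∨ (altCount s ≤ 1 ∧ s.head? = some true)

end PaperFO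

namespace PaperFO

/-! ### Auxiliary development for statement_12 -/

open Classical Finset

noncomputable section Statement12Aux

/-- Iterated base-2 exponential: `expIter k x` applies `2 ^ ·` to `x`, `k` times. -/
def expIter : ℕ → ℕ → ℕ
  | 0, x => x
  | k+1, x => 2 ^ expIter k x

lemma expIter_mono (k : ℕ) {a b : ℕ} (h : a ≤ b) : expIter k a ≤ expIter k b := by
  induction k with
  | zero => exact h
  | succ k ih => exact Nat.pow_le_pow_right (by norm_num) ih

lemma expIter_lt (k : ℕ) {a b : ℕ} (h : a < b) : expIter k a < expIter k b := by
  induction k with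
  | zero => exact h
  | succ k ih => exact Nat.pow_lt_pow_right (by norm_num) ih

lemma le_expIter (k x : ℕ) : x ≤ expIter k x := by
  induction k with
  | zero => exact le_refl x
  | succ k ih => exact le_trans ih (le_of_lt (Nat.lt_two_pow_self))

lemma expIter_two_pow (k x : ℕ) : expIter k (2 ^ x) = expIter (k+1) x := by
  induction k with
  | zero => rfl
  | succ k ih => simp only [expIter, ih]

lemma tower_pos (k : ℕ) : 1 ≤ tower k := by
  induction k with
  | zero => exact le_refl 1
  | succ k ih => exact Nat.one_le_two_pow

lemma tower_le_succ (k : ℕ) : tower k ≤ tower (k+1) := le_of_lt (Nat.lt_two_pow_self)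

lemma tower_mono {a b : ℕ} (h : a ≤ b) : tower a ≤ tower b := by
  induction b with
  | zero => simpa [Nat.le_zero.mp h]
  | succ b ih =>
    rcases Nat.lt_or_ge a (b+1) with h' | h'
    · exact le_trans (ih (by omega)) (tower_le_succ b)
    · have : a = b + 1 := by omega
      subst this; exact le_refl _
lemma tower_add (a b : ℕ) : tower (a + b) = expIter b (tower a) := by
  induction b with
  | zero => rfl
  | succ b ih => show 2 ^ tower (a+b) = 2 ^ expIter b (tower a); rw [ih]

lemma logStar_of_le {n : ℕ} (h : n ≤ 1) : logStar n = 0 := by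
  rw [logStar]; simp [h]

lemma logStar_of_gt {n : ℕ} (h : 1 < n) : logStar n = logStar (Nat.log 2 n) + 1 := by
  rw [logStar]; simp [Nat.not_le.mpr h]

lemma logStar_mono : ∀ {n m : ℕ}, m ≤ n → logStar m ≤ logStar n := by
  intro n
  induction n using Nat.strong_induction_on with
  | _ n ih =>
    intro m h
    rcases le_or_gt n 1 with h1 | h1
    · rw [logStar_of_le (le_trans h h1), logStar_of_le h1]
    · rcases le_or_gt m 1 with h2 | h2
      · rw [logStar_of_le h2]; exact Nat.zero_le _
      · rw [logStar_of_gt h1, logStar_of_gt h2]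
        have hlt : Nat.log 2 n < n := Nat.log_lt_self 2 (by omega)
        exact Nat.succ_le_succ (ih _ hlt (Nat.log_mono_right h))

lemma tower_logStar_le : ∀ {n : ℕ}, 1 ≤ n → tower (logStar n) ≤ n := by
  intro n
  induction n using Nat.strong_induction_on with
  | _ n ih =>
    intro h1
    rcases le_or_gt n 1 with h | h
    · rw [logStar_of_le h]; show 1 ≤ n; omega
    · rw [logStar_of_gt h]
      have hlog1 : 1 ≤ Nat.log 2 n := by
        have h2 : Nat.log 2 2 ≤ Nat.log 2 n := Nat.log_mono_right (show 2 ≤ n by omega)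
        have h3 : Nat.log 2 2 = 1 := by decide
        omega
      have hlt : Nat.log 2 n < n := Nat.log_lt_self 2 (by omega)
      calc tower (logStar (Nat.log 2 n) + 1) = 2 ^ tower (logStar (Nat.log 2 n)) := rfl
        _ ≤ 2 ^ Nat.log 2 n := Nat.pow_le_pow_right (by norm_num) (ih _ hlt hlog1)
        _ ≤ n := Nat.pow_log_le_self 2 (by omega)

lemma lt_tower_logStar : ∀ (y : ℕ), y < tower (logStar y + 1) := by
  intro y
  induction y using Nat.strong_induction_on with
  | _ y ih =>
    rcases le_or_gt y 1 with h | h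
    · rw [logStar_of_le h]; show y < 2; omega
    · rw [logStar_of_gt h]
      have hlt : Nat.log 2 y < y := Nat.log_lt_self 2 (by omega)
      have ihh := ih _ hlt
      calc y < 2 ^ (Nat.log 2 y + 1) := Nat.lt_pow_succ_log_self (by norm_num) y
        _ ≤ 2 ^ tower (logStar (Nat.log 2 y) + 1) := Nat.pow_le_pow_right (by norm_num) ihh
        _ = tower (logStar (Nat.log 2 y) + 1 + 1) := rfl

lemma logStar_one_le {n : ℕ} (h : 2 ≤ n) : 1 ≤ logStar n := by
  rw [logStar_of_gt (by omega)]; omega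

end Statement12Aux


section Statement12Aux2
open Fml

/-- `Rfun k A = expIter (k-1) A * ... * expIter 0 A`. -/
noncomputable def Rfun : ℕ → ℕ → ℕ
  | 0, _ => 1
  | k+1, A => expIter k A * Rfun k A

lemma le_two_pow_pred {x : ℕ} (h : 1 ≤ x) : x ≤ 2 ^ (x - 1) := by
  induction x with
  | zero => omega
  | succ x ih =>
    rcases Nat.eq_or_lt_of_le h with h' | h'
    · simp [← h']
    · have hx : 1 ≤ x := by omega
      have := ih hx
      have h2 : 2 ^ (x - 1) + 1 ≤ 2 ^ (x - 1) + 2 ^ (x - 1) := by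
        have : 1 ≤ 2 ^ (x - 1) := Nat.one_le_two_pow
        omega
      calc x + 1 ≤ 2 ^ (x-1) + 1 := by omega
        _ ≤ 2 ^ (x-1) + 2 ^ (x-1) := h2
        _ = 2 ^ (x - 1 + 1) := by ring
        _ = 2 ^ (x + 1 - 1) := by congr 1; omega

lemma expIter_pos (k : ℕ) {A : ℕ} (hA : 1 ≤ A) : 1 ≤ expIter k A :=
  le_trans hA (le_expIter k A)

/-- key additive bound: `expIter (k+1) A + expIter k (A^2) ≤ expIter (k+1) (A^2)` -/
lemma expIter_add_bound {A : ℕ} (hA : 2 ≤ A) :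
    ∀ k : ℕ, expIter (k+1) A + expIter k (A^2) ≤ expIter (k+1) (A^2) := by
  intro k
  induction k with
  | zero =>
    show 2 ^ A + A ^ 2 ≤ 2 ^ (A ^ 2)
    have hA1 : A + 1 ≤ A ^ 2 := by nlinarith
    have h1 : A ≤ A ^ 2 - 1 := by omega
    have h2 : A ^ 2 ≤ 2 ^ (A ^ 2 - 1) := le_two_pow_pred (by omega)
    have h3 : 2 ^ A ≤ 2 ^ (A ^ 2 - 1) := Nat.pow_le_pow_right (by norm_num) h1
    have h4 : 2 ^ (A ^ 2 - 1) + 2 ^ (A ^ 2 - 1) = 2 ^ (A ^ 2 - 1 + 1) := by ring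
    have h5 : A ^ 2 - 1 + 1 = A ^ 2 := by omega
    calc 2 ^ A + A ^ 2 ≤ 2 ^ (A^2-1) + 2 ^ (A^2-1) := by omega
      _ = 2 ^ (A^2 - 1 + 1) := h4
      _ = 2 ^ (A ^ 2) := by rw [h5]
  | succ k ih =>
    show 2 ^ expIter (k+1) A + 2 ^ expIter k (A^2) ≤ 2 ^ expIter (k+1) (A^2)
    have hA2 : 2 ≤ A ^ 2 := by nlinarith
    have h1 : expIter (k+1) A ≤ expIter (k+1) (A^2) - 1 := by
      have hp : 1 ≤ expIter k (A^2) := expIter_pos k (by omega)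
      omega
    have h2 : expIter k (A^2) ≤ expIter (k+1) (A^2) - 1 := by
      have : expIter k (A^2) < 2 ^ expIter k (A^2) := Nat.lt_two_pow_self
      show expIter k (A^2) ≤ 2 ^ expIter k (A^2) - 1
      omega
    have h3 : 2 ^ expIter (k+1) A ≤ 2 ^ (expIter (k+1) (A^2) - 1) :=
      Nat.pow_le_pow_right (by norm_num) h1
    have h4 : 2 ^ expIter k (A^2) ≤ 2 ^ (expIter (k+1) (A^2) - 1) :=
      Nat.pow_le_pow_right (by norm_num) h2
    have h5 : 1 ≤ expIter (k+1) (A^2) := expIter_pos _ (by omega)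
    calc 2 ^ expIter (k+1) A + 2 ^ expIter k (A^2)
        ≤ 2 ^ (expIter (k+1) (A^2) - 1) + 2 ^ (expIter (k+1) (A^2) - 1) := by omega
      _ = 2 ^ (expIter (k+1) (A^2) - 1 + 1) := by ring
      _ = 2 ^ expIter (k+1) (A^2) := by congr 1; omega

lemma expIter_mul_bound {A : ℕ} (hA : 2 ≤ A) (k : ℕ) :
    expIter (k+1) A * expIter k (A^2) ≤ expIter (k+1) (A^2) := by
  cases k with
  | zero =>
    show 2 ^ A * A ^ 2 ≤ 2 ^ (A ^ 2)
    have h1 : A ^ 2 ≤ 2 ^ (2 * A) := by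
      calc A ^ 2 ≤ (2 ^ A) ^ 2 := Nat.pow_le_pow_left (le_of_lt (Nat.lt_two_pow_self (n := A))) 2
        _ = 2 ^ (2 * A) := by rw [← pow_mul, mul_comm]
    rcases Nat.eq_or_lt_of_le hA with h | h
    · rw [← h]; norm_num
    · have h3A : 3 * A ≤ A ^ 2 := by nlinarith
      calc 2 ^ A * A ^ 2 ≤ 2 ^ A * 2 ^ (2 * A) := Nat.mul_le_mul_left _ h1
        _ = 2 ^ (A + 2 * A) := by rw [← pow_add]
        _ ≤ 2 ^ (A ^ 2) := Nat.pow_le_pow_right (by norm_num) (by omega)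
  | succ k =>
    show 2 ^ expIter (k+1) A * 2 ^ expIter k (A^2) ≤ 2 ^ expIter (k+1) (A^2)
    rw [← pow_add]
    exact Nat.pow_le_pow_right (by norm_num) (expIter_add_bound hA k)

lemma rfun_bound {A : ℕ} (hA : 2 ≤ A) : ∀ k : ℕ, Rfun (k+1) A ≤ expIter k (A^2) := by
  intro k
  induction k with
  | zero =>
    show expIter 0 A * 1 ≤ A ^ 2
    simp only [expIter, mul_one]
    nlinarith
  | succ k ih =>
    show expIter (k+1) A * Rfun (k+1) A ≤ expIter (k+1) (A^2)
    calc expIter (k+1) A * Rfun (k+1) A ≤ expIter (k+1) A * expIter k (A^2) :=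
        Nat.mul_le_mul_left _ ih
      _ ≤ expIter (k+1) (A^2) := expIter_mul_bound hA k

lemma sixteen_d_bound (d : ℕ) : 16 * d + 16 ≤ 2 ^ (d + 4) := by
  induction d with
  | zero => norm_num
  | succ d ih =>
    have h2 : 2 ^ (d + 1 + 4) = 2 * 2 ^ (d + 4) := by ring
    omega

lemma twelve_d_bound (d : ℕ) : 12 * d + 4 < 2 ^ (d + 4) := by
  have := sixteen_d_bound d; omega

/-- evaluation only depends on the values of free variables -/
lemma eval_congr {V : Type} (r : V → V → Prop) :
    ∀ (φ : Fml) (σ σ' : ℕ → V), (∀ i ∈ φ.freeVars, σ i = σ' i) →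
      (φ.eval r σ ↔ φ.eval r σ') := by
  intro φ
  induction φ with
  | eq i j =>
    intro σ σ' h
    have hi := h i (by simp [freeVars])
    have hj := h j (by simp [freeVars])
    simp [eval, hi, hj]
  | rel i j =>
    intro σ σ' h
    have hi := h i (by simp [freeVars])
    have hj := h j (by simp [freeVars])
    simp [eval, hi, hj]
  | not ψ ih =>
    intro σ σ' h
    simp only [eval]
    exact not_congr (ih σ σ' h)
  | and ψ χ ih1 ih2 =>
    intro σ σ' h
    simp only [eval]
    exact and_congr (ih1 σ σ' fun i hi => h i (by simp [freeVars, hi]))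
      (ih2 σ σ' fun i hi => h i (by simp [freeVars, hi]))
  | or ψ χ ih1 ih2 =>
    intro σ σ' h
    simp only [eval]
    exact or_congr (ih1 σ σ' fun i hi => h i (by simp [freeVars, hi]))
      (ih2 σ σ' fun i hi => h i (by simp [freeVars, hi]))
  | all i ψ ih =>
    intro σ σ' h
    simp only [eval]
    refine forall_congr' fun v => ih _ _ fun j hj => ?_
    by_cases hij : j = i
    · simp [hij, Function.update]
    · simp only [Function.update, dif_neg hij]
      exact h j (by simp [freeVars, Finset.mem_erase, hij, hj])
  | ex i ψ ih =>
    intro σ σ' h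
    simp only [eval]
    refine exists_congr fun v => ih _ _ fun j hj => ?_
    by_cases hij : j = i
    · simp [hij, Function.update]
    · simp only [Function.update, dif_neg hij]
      exact h j (by simp [freeVars, Finset.mem_erase, hij, hj])

lemma one_le_depth_of_sentence : ∀ (φ : Fml), φ.freeVars = ∅ → 1 ≤ φ.depth := by
  intro φ
  induction φ with
  | eq i j => intro h; exfalso; simp [freeVars] at h
  | rel i j => intro h; exfalso; simp [freeVars] at h
  | not ψ ih => intro h; exact ih h
  | and ψ χ ih1 ih2 =>
    intro h
    simp only [freeVars, Finset.union_eq_empty] at h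
    exact le_trans (ih1 h.1) (le_max_left _ _)
  | or ψ χ ih1 ih2 =>
    intro h
    simp only [freeVars, Finset.union_eq_empty] at h
    exact le_trans (ih1 h.1) (le_max_left _ _)
  | all i ψ ih => intro _; simp [depth]
  | ex i ψ ih => intro _; simp [depth]

end Statement12Aux2


section Statement12Aux3
open Fml

/-- classical decide -/
noncomputable def cdec (p : Prop) : Bool := @decide p (Classical.propDecidable p)

lemma cdec_eq_cdec {p q : Prop} : cdec p = cdec q ↔ (p ↔ q) := by
  unfold cdec; exact decide_eq_decide

/-- value space for head profiles -/
abbrev CHP : Type := List (Bool × Bool × Bool) × Bool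

/-- value space for depth-`k` types -/
def CT : ℕ → Type
  | 0 => CHP
  | k+1 => CHP × Finset (CT k)

noncomputable def instDecCT : (k : ℕ) → DecidableEq (CT k)
  | 0 => (inferInstance : DecidableEq CHP)
  | k+1 => letI := instDecCT k; (inferInstance : DecidableEq (CHP × Finset (CT k)))

noncomputable instance (k : ℕ) : DecidableEq (CT k) := instDecCT k

/-- head profile of a list of vertices: relations of the head to the tail -/
noncomputable def hpr {V : Type} (r : V → V → Prop) : List V → CHP
  | [] => ([], false)
  | x :: ys => (ys.map (fun y => (cdec (x = y), cdec (r x y), cdec (r y x))), cdec (r x x))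

/-- the depth-`k` type of a list of vertices -/
noncomputable def tty {V : Type} [Fintype V] (r : V → V → Prop) : (k : ℕ) → List V → CT k
  | 0, w => hpr r w
  | k+1, w => ((hpr r w, (Finset.univ.image fun a : V => tty r k (a :: w))) : CHP × Finset (CT k))

noncomputable def hpOf : (k : ℕ) → CT k → CHP
  | 0, x => x
  | _+1, x => x.1

lemma hpOf_tty {V : Type} [Fintype V] (r : V → V → Prop) (k : ℕ) (w : List V) :
    hpOf k (tty r k w) = hpr r w := by
  cases k <;> rfl

lemma tty_succ_snd {V : Type} [Fintype V] (r : V → V → Prop) (k : ℕ) (w : List V) :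
    (tty r (k+1) w).2 = (Finset.univ.image fun a : V => tty r k (a :: w)) := rfl

/-- all possible head profiles with tail length `s` -/
noncomputable def HPu (s : ℕ) : Finset CHP :=
  Finset.univ.image (fun p : ((Fin s → Bool × Bool × Bool) × Bool) => (List.ofFn p.1, p.2))

/-- the space of possible depth-`k` types of lists with tail length `s` -/
noncomputable def TSp : (k : ℕ) → (s : ℕ) → Finset (CT k)
  | 0, s => HPu s
  | k+1, s => (HPu s) ×ˢ (TSp k (s+1)).powerset

lemma hpr_mem_HPu {V : Type} (r : V → V → Prop) (x : V) (ys : List V) :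
    hpr r (x :: ys) ∈ HPu ys.length := by
  apply Finset.mem_image.mpr
  refine ⟨(fun i : Fin ys.length => (cdec (x = ys[i]), cdec (r x ys[i]), cdec (r ys[i] x)),
    cdec (r x x)), Finset.mem_univ _, ?_⟩
  unfold hpr
  refine Prod.ext ?_ rfl
  apply List.ext_getElem
  · simp
  · intro n h1 h2
    simp

lemma tty_mem_TSp {V : Type} [Fintype V] (r : V → V → Prop) :
    ∀ (k : ℕ) (x : V) (ys : List V), tty r k (x :: ys) ∈ TSp k ys.length := by
  intro k
  induction k with
  | zero => intro x ys; exact hpr_mem_HPu r x ys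
  | succ k ih =>
    intro x ys
    show (_, _) ∈ (HPu ys.length) ×ˢ (TSp k (ys.length+1)).powerset
    rw [Finset.mem_product]
    refine ⟨hpr_mem_HPu r x ys, Finset.mem_powerset.mpr ?_⟩
    intro τ hτ
    rcases Finset.mem_image.mp hτ with ⟨a, _, rfl⟩
    exact ih a (x :: ys)

lemma HPu_card (s : ℕ) : (HPu s).card ≤ 2 ^ (3 * s + 1) := by
  calc (HPu s).card ≤ Fintype.card ((Fin s → Bool × Bool × Bool) × Bool) :=
        le_trans (Finset.card_image_le) (le_of_eq (Finset.card_univ))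
    _ = 8 ^ s * 2 := by simp [Fintype.card_fun]
    _ ≤ 2 ^ (3 * s + 1) := by
        rw [show (8:ℕ) = 2^3 by norm_num, ← pow_mul, pow_succ, mul_comm 3 s]

lemma HPu_nonempty (s : ℕ) : (HPu s).Nonempty :=
  Finset.Nonempty.image ⟨default, Finset.mem_univ _⟩ _

lemma TSp_nonempty : ∀ k s, (TSp k s).Nonempty := by
  intro k
  induction k with
  | zero => intro s; exact HPu_nonempty s
  | succ k ih =>
    intro s
    obtain ⟨hp0, hhp⟩ := HPu_nonempty s
    exact ⟨(hp0, ∅), Finset.mem_product.mpr ⟨hhp, Finset.empty_mem_powerset _⟩⟩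

lemma TSp_card_pos (k s : ℕ) : 1 ≤ (TSp k s).card :=
  Finset.card_pos.mpr (TSp_nonempty k s)

lemma TSp_card_succ (k s : ℕ) :
    (TSp (k+1) s).card = (HPu s).card * 2 ^ (TSp k (s+1)).card := by
  show ((HPu s) ×ˢ (TSp k (s+1)).powerset).card = _
  rw [Finset.card_product, Finset.card_powerset]

lemma pow_ge_linear (s : ℕ) : 6 * s + 3 ≤ 2 ^ (3 * s + 4) := by
  have h1 := sixteen_d_bound s
  have h2 : 2 ^ (s + 4) ≤ 2 ^ (3 * s + 4) := Nat.pow_le_pow_right (by norm_num) (by omega)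
  omega

lemma tc_bound : ∀ (k s : ℕ), (TSp k s).card * 2 ^ (3 * s + 1) ≤ expIter k (2 ^ (6 * (s + k) + 2)) := by
  intro k
  induction k with
  | zero =>
    intro s
    show (TSp 0 s).card * 2 ^ (3*s+1) ≤ 2 ^ (6 * (s + 0) + 2)
    calc (TSp 0 s).card * 2 ^ (3*s+1) ≤ 2 ^ (3*s+1) * 2 ^ (3*s+1) :=
        Nat.mul_le_mul_right _ (HPu_card s)
      _ = 2 ^ (3*s+1 + (3*s+1)) := by rw [← pow_add]
      _ ≤ 2 ^ (6 * (s+0) + 2) := Nat.pow_le_pow_right (by norm_num) (by omega)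
  | succ k ih =>
    intro s
    set T := (TSp k (s+1)).card with hT
    have hTpos : 1 ≤ T := TSp_card_pos k (s+1)
    have key : 6*s + 2 + T ≤ expIter k (2 ^ (6 * (s+1+k) + 2)) := by
      have ih1 := ih (s+1)
      have h1 : 6*s+3 ≤ 2 ^ (3*s+4) := pow_ge_linear s
      have h2 : (2 ^ (3*s+4) - 1) ≤ (2 ^ (3*s+4) - 1) * T := Nat.le_mul_of_pos_right _ hTpos
      have h3 : (2 ^ (3*s+4) - 1) * T + T = 2 ^ (3*s+4) * T := by
        rw [Nat.sub_one_mul]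
        have : T ≤ 2 ^ (3*s+4) * T := Nat.le_mul_of_pos_left _ (Nat.pow_pos (by norm_num))
        omega
      have h4 : T * 2 ^ (3*(s+1)+1) ≤ expIter k (2 ^ (6*(s+1+k)+2)) := ih1
      have h5 : 2 ^ (3*s+4) * T = T * 2 ^ (3*(s+1)+1) := by ring_nf
      omega
    calc (TSp (k+1) s).card * 2 ^ (3*s+1)
        = (HPu s).card * 2 ^ T * 2 ^ (3*s+1) := by rw [TSp_card_succ]
      _ ≤ 2 ^ (3*s+1) * 2 ^ T * 2 ^ (3*s+1) :=
          Nat.mul_le_mul_right _ (Nat.mul_le_mul_right _ (HPu_card s))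
      _ = 2 ^ (3*s+1 + T + (3*s+1)) := by rw [← pow_add, ← pow_add]
      _ ≤ 2 ^ expIter k (2 ^ (6*(s+1+k)+2)) := Nat.pow_le_pow_right (by norm_num) (by omega)
      _ = expIter (k+1) (2 ^ (6*(s+(k+1))+2)) := by
          show _ = 2 ^ expIter k (2 ^ (6*(s+(k+1))+2))
          congr 3
          omega

end Statement12Aux3


section Statement12Aux4
open Fml

variable {V : Type} [Fintype V]

/-- interpretation of variables from an index list and value list -/
def interp (d₀ : V) (is : List ℕ) (vs : List V) : ℕ → V :=
  fun i => vs.getD (is.idxOf i) d₀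

lemma interp_update (d₀ : V) (is : List ℕ) (vs : List V) (i : ℕ) (v : V) :
    Function.update (interp d₀ is vs) i v = interp d₀ (i :: is) (v :: vs) := by
  funext j
  by_cases h : j = i
  · subst h
    simp [Function.update, interp, List.idxOf_cons_self]
  · have hne : j ≠ i := h
    simp only [Function.update, dif_neg h, interp]
    rw [List.idxOf_cons_ne _ (Ne.symm hne)]
    rfl

lemma hp_triples (r : V → V → Prop) (d₀ : V) (k : ℕ) (vs vs' : List V)
    (hlen : vs.length = vs'.length)
    (hfam : ∀ j, tty r (k+j) (vs.drop j) = tty r (k+j) (vs'.drop j))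
    {p q : ℕ} (hq : q < vs.length) (hpq : p ≤ q) :
    ((vs.getD p d₀ = vs.getD q d₀ ↔ vs'.getD p d₀ = vs'.getD q d₀) ∧
     (r (vs.getD p d₀) (vs.getD q d₀) ↔ r (vs'.getD p d₀) (vs'.getD q d₀)) ∧
     (r (vs.getD q d₀) (vs.getD p d₀) ↔ r (vs'.getD q d₀) (vs'.getD p d₀))) := by
  have hp : p < vs.length := lt_of_le_of_lt hpq hq
  have hp' : p < vs'.length := hlen ▸ hp
  have hq' : q < vs'.length := hlen ▸ hq
  have h0 := hfam p
  have hhp : hpr r (vs.drop p) = hpr r (vs'.drop p) := by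
    rw [← hpOf_tty r (k+p), ← hpOf_tty r (k+p), h0]
  rw [List.drop_eq_getElem_cons hp, List.drop_eq_getElem_cons hp'] at hhp
  unfold hpr at hhp
  have hfst := congrArg Prod.fst hhp
  have hsnd := congrArg Prod.snd hhp
  simp only at hfst hsnd
  rw [List.getD_eq_getElem vs d₀ hp, List.getD_eq_getElem vs d₀ hq,
    List.getD_eq_getElem vs' d₀ hp', List.getD_eq_getElem vs' d₀ hq']
  rcases Nat.eq_or_lt_of_le hpq with heq | hlt
  · subst heq
    have hloop : (r vs[p] vs[p] ↔ r vs'[p] vs'[p]) := cdec_eq_cdec.mp hsnd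
    exact ⟨by simp, hloop, hloop⟩
  · have hj : q - (p+1) < (vs.drop (p+1)).length := by
      rw [List.length_drop]; omega
    have hj' : q - (p+1) < (vs'.drop (p+1)).length := by
      rw [List.length_drop]; omega
    have hjm : q - (p+1) < (List.map (fun y => (cdec (vs[p] = y), cdec (r vs[p] y), cdec (r y vs[p]))) (vs.drop (p+1))).length := by
      rw [List.length_map]; exact hj
    have helem := List.getElem_of_eq hfst hjm
    rw [List.getElem_map, List.getElem_map] at helem
    have hvq : (vs.drop (p+1))[q - (p+1)] = vs[q] := by
      rw [List.getElem_drop]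
      congr 1
      omega
    have hvq' : (vs'.drop (p+1))[q - (p+1)]'hj' = vs'[q] := by
      rw [List.getElem_drop]
      congr 1
      omega
    rw [hvq, hvq'] at helem
    have e1 := congrArg Prod.fst helem
    have e2 := congrArg (fun z => z.2.1) helem
    have e3 := congrArg (fun z => z.2.2) helem
    simp only at e1 e2 e3
    exact ⟨cdec_eq_cdec.mp e1, cdec_eq_cdec.mp e2, cdec_eq_cdec.mp e3⟩

lemma t_lemma (r : V → V → Prop) (d₀ : V) :
    ∀ (φ : Fml) (k : ℕ), φ.depth ≤ k →
    ∀ (is : List ℕ) (vs vs' : List V),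
      vs.length = is.length → vs'.length = is.length →
      φ.freeVars ⊆ is.toFinset →
      (∀ j, tty r (k+j) (vs.drop j) = tty r (k+j) (vs'.drop j)) →
      (φ.eval r (interp d₀ is vs) ↔ φ.eval r (interp d₀ is vs')) := by
  intro φ
  induction φ with
  | eq i j =>
    intro k hk is vs vs' h1 h2 hfv hfam
    have hi : i ∈ is := by
      have := hfv (by simp [freeVars] : i ∈ (Fml.eq i j).freeVars)
      exact List.mem_toFinset.mp this
    have hjm : j ∈ is := by
      have := hfv (by simp [freeVars] : j ∈ (Fml.eq i j).freeVars)
      exact List.mem_toFinset.mp this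
    have hpi : is.idxOf i < vs.length := by
      rw [h1]; exact List.idxOf_lt_length_iff.mpr hi
    have hqi : is.idxOf j < vs.length := by
      rw [h1]; exact List.idxOf_lt_length_iff.mpr hjm
    show (interp d₀ is vs i = interp d₀ is vs j) ↔ _
    simp only [interp]
    rcases le_or_gt (is.idxOf i) (is.idxOf j) with hle | hlt
    · exact (hp_triples r d₀ k vs vs' (h1.trans h2.symm) hfam hqi hle).1
    · have h := (hp_triples r d₀ k vs vs' (h1.trans h2.symm) hfam hpi (le_of_lt hlt)).1
      constructor
      · intro hh; exact (h.mp hh.symm).symm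
      · intro hh; exact (h.mpr hh.symm).symm
  | rel i j =>
    intro k hk is vs vs' h1 h2 hfv hfam
    have hi : i ∈ is := by
      have := hfv (by simp [freeVars] : i ∈ (Fml.rel i j).freeVars)
      exact List.mem_toFinset.mp this
    have hjm : j ∈ is := by
      have := hfv (by simp [freeVars] : j ∈ (Fml.rel i j).freeVars)
      exact List.mem_toFinset.mp this
    have hpi : is.idxOf i < vs.length := by
      rw [h1]; exact List.idxOf_lt_length_iff.mpr hi
    have hqi : is.idxOf j < vs.length := by
      rw [h1]; exact List.idxOf_lt_length_iff.mpr hjm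
    show (r (interp d₀ is vs i) (interp d₀ is vs j)) ↔ _
    simp only [interp]
    rcases le_or_gt (is.idxOf i) (is.idxOf j) with hle | hlt
    · exact (hp_triples r d₀ k vs vs' (h1.trans h2.symm) hfam hqi hle).2.1
    · exact (hp_triples r d₀ k vs vs' (h1.trans h2.symm) hfam hpi (le_of_lt hlt)).2.2
  | not ψ ih =>
    intro k hk is vs vs' h1 h2 hfv hfam
    exact not_congr (ih k hk is vs vs' h1 h2 hfv hfam)
  | and ψ χ ih1 ih2 =>
    intro k hk is vs vs' h1 h2 hfv hfam
    simp only [depth, max_le_iff] at hk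
    simp only [freeVars] at hfv
    exact and_congr
      (ih1 k hk.1 is vs vs' h1 h2 (le_trans Finset.subset_union_left hfv) hfam)
      (ih2 k hk.2 is vs vs' h1 h2 (le_trans Finset.subset_union_right hfv) hfam)
  | or ψ χ ih1 ih2 =>
    intro k hk is vs vs' h1 h2 hfv hfam
    simp only [depth, max_le_iff] at hk
    simp only [freeVars] at hfv
    exact or_congr
      (ih1 k hk.1 is vs vs' h1 h2 (le_trans Finset.subset_union_left hfv) hfam)
      (ih2 k hk.2 is vs vs' h1 h2 (le_trans Finset.subset_union_right hfv) hfam)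
  | all i ψ ih =>
    intro k hk is vs vs' h1 h2 hfv hfam
    obtain ⟨k', rfl⟩ : ∃ k'', k = k'' + 1 := by
      have : 1 ≤ k := le_trans (by simp [depth]) hk
      exact ⟨k - 1, by omega⟩
    have hdψ : ψ.depth ≤ k' := by
      have : ψ.depth + 1 ≤ k' + 1 := hk
      omega
    have hfvψ : ψ.freeVars ⊆ (i :: is).toFinset := by
      rw [List.toFinset_cons]
      exact Finset.subset_insert_iff.mpr (by simpa [freeVars] using hfv)
    have himg : (Finset.univ.image fun a : V => tty r k' (a :: vs)) =
        (Finset.univ.image fun a : V => tty r k' (a :: vs')) := by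
      have h0 := hfam 0
      simp only [Nat.add_zero, List.drop_zero] at h0
      exact congrArg (fun z : CHP × Finset (CT k') => z.2) h0
    have hfam' : ∀ (c c' : V), tty r k' (c :: vs) = tty r k' (c' :: vs') →
        ∀ j, tty r (k'+j) ((c :: vs).drop j) = tty r (k'+j) ((c' :: vs').drop j) := by
      intro c c' hc j
      cases j with
      | zero => simpa using hc
      | succ j' =>
        show tty r (k' + (j'+1)) (vs.drop j') = tty r (k' + (j'+1)) (vs'.drop j')
        have e : k' + (j'+1) = (k'+1) + j' := by omega
        rw [e]
        exact hfam j'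
    simp only [eval]
    constructor
    · intro H c'
      have hmem : tty r k' (c' :: vs') ∈ Finset.univ.image (fun a : V => tty r k' (a :: vs')) :=
        Finset.mem_image_of_mem _ (Finset.mem_univ c')
      rw [← himg] at hmem
      obtain ⟨c, _, hc⟩ := Finset.mem_image.mp hmem
      have hHc := H c
      rw [interp_update] at hHc ⊢
      exact (ih k' hdψ (i :: is) (c :: vs) (c' :: vs') (by simp [h1]) (by simp [h2])
        hfvψ (hfam' c c' hc)).mp hHc
    · intro H c
      have hmem : tty r k' (c :: vs) ∈ Finset.univ.image (fun a : V => tty r k' (a :: vs)) :=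
        Finset.mem_image_of_mem _ (Finset.mem_univ c)
      rw [himg] at hmem
      obtain ⟨c', _, hc⟩ := Finset.mem_image.mp hmem
      have hHc := H c'
      rw [interp_update] at hHc ⊢
      exact (ih k' hdψ (i :: is) (c :: vs) (c' :: vs') (by simp [h1]) (by simp [h2])
        hfvψ (hfam' c c' hc.symm)).mpr hHc
  | ex i ψ ih =>
    intro k hk is vs vs' h1 h2 hfv hfam
    obtain ⟨k', rfl⟩ : ∃ k'', k = k'' + 1 := by
      have : 1 ≤ k := le_trans (by simp [depth]) hk
      exact ⟨k - 1, by omega⟩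
    have hdψ : ψ.depth ≤ k' := by
      have : ψ.depth + 1 ≤ k' + 1 := hk
      omega
    have hfvψ : ψ.freeVars ⊆ (i :: is).toFinset := by
      rw [List.toFinset_cons]
      exact Finset.subset_insert_iff.mpr (by simpa [freeVars] using hfv)
    have himg : (Finset.univ.image fun a : V => tty r k' (a :: vs)) =
        (Finset.univ.image fun a : V => tty r k' (a :: vs')) := by
      have h0 := hfam 0
      simp only [Nat.add_zero, List.drop_zero] at h0
      exact congrArg (fun z : CHP × Finset (CT k') => z.2) h0
    have hfam' : ∀ (c c' : V), tty r k' (c :: vs) = tty r k' (c' :: vs') →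
        ∀ j, tty r (k'+j) ((c :: vs).drop j) = tty r (k'+j) ((c' :: vs').drop j) := by
      intro c c' hc j
      cases j with
      | zero => simpa using hc
      | succ j' =>
        show tty r (k' + (j'+1)) (vs.drop j') = tty r (k' + (j'+1)) (vs'.drop j')
        have e : k' + (j'+1) = (k'+1) + j' := by omega
        rw [e]
        exact hfam j'
    simp only [eval]
    constructor
    · rintro ⟨c, hHc⟩
      have hmem : tty r k' (c :: vs) ∈ Finset.univ.image (fun a : V => tty r k' (a :: vs)) :=
        Finset.mem_image_of_mem _ (Finset.mem_univ c)
      rw [himg] at hmem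
      obtain ⟨c', _, hc⟩ := Finset.mem_image.mp hmem
      refine ⟨c', ?_⟩
      rw [interp_update] at hHc ⊢
      exact (ih k' hdψ (i :: is) (c :: vs) (c' :: vs') (by simp [h1]) (by simp [h2])
        hfvψ (hfam' c c' hc.symm)).mp hHc
    · rintro ⟨c', hHc⟩
      have hmem : tty r k' (c' :: vs') ∈ Finset.univ.image (fun a : V => tty r k' (a :: vs')) :=
        Finset.mem_image_of_mem _ (Finset.mem_univ c')
      rw [← himg] at hmem
      obtain ⟨c, _, hc⟩ := Finset.mem_image.mp hmem
      refine ⟨c, ?_⟩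
      rw [interp_update] at hHc ⊢
      exact (ih k' hdψ (i :: is) (c :: vs) (c' :: vs') (by simp [h1]) (by simp [h2])
        hfvψ (hfam' c c' hc)).mpr hHc

end Statement12Aux4


section Statement12Aux5
open Fml

/-- no existential quantifier anywhere -/
def ExFree : Fml → Prop
  | .eq _ _ => True
  | .rel _ _ => True
  | .not ψ => ExFree ψ
  | .and ψ χ => ExFree ψ ∧ ExFree χ
  | .or ψ χ => ExFree ψ ∧ ExFree χ
  | .all _ ψ => ExFree ψ
  | .ex _ _ => False

/-- the Λ_{1/2} shape: existentials never occur below a universal -/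
def GoodL : Fml → Prop
  | .eq _ _ => True
  | .rel _ _ => True
  | .not _ => True
  | .and ψ χ => GoodL ψ ∧ GoodL χ
  | .or ψ χ => GoodL ψ ∧ GoodL χ
  | .all _ ψ => ExFree ψ
  | .ex _ ψ => GoodL ψ

lemma qstrings_nonempty : ∀ φ : Fml, φ.qstrings.Nonempty := by
  intro φ
  induction φ with
  | eq i j => exact ⟨[], rfl⟩
  | rel i j => exact ⟨[], rfl⟩
  | not ψ ih => exact ih
  | and ψ χ ih1 ih2 => exact ih1.mono Set.subset_union_left
  | or ψ χ ih1 ih2 => exact ih1.mono Set.subset_union_left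
  | all i ψ ih => exact ih.image _
  | ex i ψ ih => exact ih.image _

lemma exists_true_of_not_exFree : ∀ φ : Fml, ¬ ExFree φ → ∃ s ∈ φ.qstrings, true ∈ s := by
  intro φ
  induction φ with
  | eq i j => intro h; exact absurd trivial h
  | rel i j => intro h; exact absurd trivial h
  | not ψ ih => exact ih
  | and ψ χ ih1 ih2 =>
    intro h
    rw [show ExFree (Fml.and ψ χ) = (ExFree ψ ∧ ExFree χ) from rfl] at h
    rcases Classical.not_and_iff_not_or_not.mp h with h' | h'
    · obtain ⟨s, hs, hts⟩ := ih1 h'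
      exact ⟨s, Or.inl hs, hts⟩
    · obtain ⟨s, hs, hts⟩ := ih2 h'
      exact ⟨s, Or.inr hs, hts⟩
  | or ψ χ ih1 ih2 =>
    intro h
    rw [show ExFree (Fml.or ψ χ) = (ExFree ψ ∧ ExFree χ) from rfl] at h
    rcases Classical.not_and_iff_not_or_not.mp h with h' | h'
    · obtain ⟨s, hs, hts⟩ := ih1 h'
      exact ⟨s, Or.inl hs, hts⟩
    · obtain ⟨s, hs, hts⟩ := ih2 h'
      exact ⟨s, Or.inr hs, hts⟩
  | all i ψ ih =>
    intro h
    obtain ⟨s, hs, hts⟩ := ih h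
    exact ⟨false :: s, ⟨s, hs, rfl⟩, List.mem_cons_of_mem _ hts⟩
  | ex i ψ ih =>
    intro _
    obtain ⟨s, hs⟩ := qstrings_nonempty ψ
    exact ⟨true :: s, ⟨s, hs, rfl⟩, List.mem_cons_self⟩

lemma altCount_cons_eq_zero {b : Bool} {l : List Bool} (h : altCount (b :: l) = 0) :
    altCount l = 0 := by
  cases l with
  | nil => rfl
  | cons c l' =>
    rw [show altCount (b :: c :: l') = (if b = c then 0 else 1) + altCount (c :: l') from rfl] at h
    omega

lemma all_eq_head_of_altCount_zero : ∀ (l : List Bool) (b : Bool),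
    altCount (b :: l) = 0 → ∀ x ∈ l, x = b := by
  intro l
  induction l with
  | nil => intro b _ x hx; cases hx
  | cons c l' ih =>
    intro b h x hx
    rw [show altCount (b :: c :: l') = (if b = c then 0 else 1) + altCount (c :: l') from rfl] at h
    have hbc : b = c := by
      by_contra hbc
      rw [if_neg hbc] at h
      omega
    rw [if_pos hbc] at h
    have h' : altCount (c :: l') = 0 := by omega
    rcases List.mem_cons.mp hx with rfl | hx'
    · exact hbc.symm
    · rw [ih c h' x hx', hbc]

/-- the Λ_{1/2} string condition -/
def LCond (φ : Fml) : Prop :=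
  ∀ s ∈ φ.qstrings, altCount s = 0 ∨ (altCount s ≤ 1 ∧ s.head? = some true)

lemma goodL_of_lcond : ∀ φ : Fml, LCond φ → GoodL φ := by
  intro φ
  induction φ with
  | eq i j => intro _; trivial
  | rel i j => intro _; trivial
  | not ψ ih => intro _; trivial
  | and ψ χ ih1 ih2 =>
    intro h
    exact ⟨ih1 (fun s hs => h s (Or.inl hs)), ih2 (fun s hs => h s (Or.inr hs))⟩
  | or ψ χ ih1 ih2 =>
    intro h
    exact ⟨ih1 (fun s hs => h s (Or.inl hs)), ih2 (fun s hs => h s (Or.inr hs))⟩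
  | all i ψ ih =>
    intro h
    show ExFree ψ
    by_contra hef
    obtain ⟨s, hs, hts⟩ := exists_true_of_not_exFree ψ hef
    have hmem : (false :: s) ∈ (Fml.all i ψ).qstrings := ⟨s, hs, rfl⟩
    rcases h _ hmem with h0 | ⟨_, hhd⟩
    · have := all_eq_head_of_altCount_zero s false h0 true hts
      simp at this
    · simp [List.head?] at hhd
  | ex i ψ ih =>
    intro h
    apply ih
    intro s hs
    have hmem : (true :: s) ∈ (Fml.ex i ψ).qstrings := ⟨s, hs, rfl⟩
    rcases h _ hmem with h0 | ⟨hle, _⟩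
    · exact Or.inl (altCount_cons_eq_zero h0)
    · cases s with
      | nil => exact Or.inl rfl
      | cons c l =>
        cases c with
        | true =>
          refine Or.inr ⟨?_, rfl⟩
          rw [show altCount (true :: true :: l) = (if true = true then 0 else 1) + altCount (true :: l) from rfl, if_pos rfl] at hle
          omega
        | false =>
          refine Or.inl ?_
          rw [show altCount (true :: false :: l) = (if true = false then 0 else 1) + altCount (false :: l) from rfl, if_neg (by simp)] at hle
          omega

/-- universal positive formulas are preserved by induced substructures -/
lemma preserve_univ {V : Type} (r : V → V → Prop) (S : Finset V) :
    ∀ (ψ : Fml), ψ.NegAtomic → ExFree ψ → ∀ (σW : ℕ → {x // x ∈ S}),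
      ψ.eval r (fun i => (σW i).1) →
      ψ.eval (fun a b : {x // x ∈ S} => r a.1 b.1) σW := by
  intro ψ
  induction ψ with
  | eq i j => intro _ _ σW h; exact Subtype.ext h
  | rel i j => intro _ _ σW h; exact h
  | not θ ih =>
    intro hna _ σW h
    cases θ with
    | eq i j =>
      intro he
      exact h (congrArg Subtype.val he)
    | rel i j => exact h
    | not θ' => exact hna.elim
    | and _ _ => exact hna.elim
    | or _ _ => exact hna.elim
    | all _ _ => exact hna.elim
    | ex _ _ => exact hna.elim
  | and θ₁ θ₂ ih1 ih2 =>
    intro hna hef σW h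
    exact ⟨ih1 hna.1 hef.1 σW h.1, ih2 hna.2 hef.2 σW h.2⟩
  | or θ₁ θ₂ ih1 ih2 =>
    intro hna hef σW h
    rcases h with h | h
    · exact Or.inl (ih1 hna.1 hef.1 σW h)
    · exact Or.inr (ih2 hna.2 hef.2 σW h)
  | all i θ ih =>
    intro hna hef σW h
    intro w
    have hw := h w.1
    have hfe : (fun j => ((Function.update σW i w) j).1) =
        Function.update (fun j => (σW j).1) i w.1 := by
      funext j
      by_cases hj : j = i
      · subst hj; simp [Function.update]
      · simp [Function.update, hj]
    apply ih hna hef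
    rw [hfe]
    exact hw
  | ex i θ ih =>
    intro _ hef
    exact hef.elim

end Statement12Aux5


section Statement12Aux6
open Fml

variable {V : Type} [Fintype V] [Nonempty V]

/-- closure property: below the chain `vs`, representatives of all witness types exist in `S` -/
def Cl (r : V → V → Prop) (S : Finset V) : ℕ → List V → Prop
  | 0, _ => True
  | k+1, vs => ∀ a : V, ∃ b : V, b ∈ S ∧ tty r k (b :: vs) = tty r k (a :: vs) ∧
      Cl r S k (b :: vs)

noncomputable def pick (r : V → V → Prop) (k : ℕ) (vs : List V) (τ : CT k) : V :=
  if h : ∃ a : V, tty r k (a :: vs) = τ then h.choose else Classical.arbitrary V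

noncomputable def reps (r : V → V → Prop) (k : ℕ) (vs : List V) : Finset V :=
  (Finset.univ.image fun a : V => tty r k (a :: vs)).image (pick r k vs)

lemma reps_spec (r : V → V → Prop) (k : ℕ) (vs : List V) (a : V) :
    ∃ b ∈ reps r k vs, tty r k (b :: vs) = tty r k (a :: vs) := by
  have hex : ∃ a' : V, tty r k (a' :: vs) = tty r k (a :: vs) := ⟨a, rfl⟩
  refine ⟨pick r k vs (tty r k (a :: vs)), ?_, ?_⟩
  · exact Finset.mem_image_of_mem _ (Finset.mem_image_of_mem _ (Finset.mem_univ a))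
  · rw [pick, dif_pos hex]
    exact hex.choose_spec

noncomputable def Bset (r : V → V → Prop) : ℕ → List V → Finset V
  | 0, _ => ∅
  | k+1, vs => reps r k vs ∪ (reps r k vs).biUnion (fun b => Bset r k (b :: vs))

lemma cl_of_subset (r : V → V → Prop) (S : Finset V) :
    ∀ (k : ℕ) (vs : List V), Bset r k vs ⊆ S → Cl r S k vs := by
  intro k
  induction k with
  | zero => intro vs _; trivial
  | succ k ih =>
    intro vs hsub a
    obtain ⟨b, hb, hbt⟩ := reps_spec r k vs a
    have hb1 : b ∈ Bset r (k+1) vs := Finset.mem_union_left _ hb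
    have hsub2 : Bset r k (b :: vs) ⊆ S := by
      refine subset_trans ?_ hsub
      refine subset_trans (Finset.subset_biUnion_of_mem (fun b => Bset r k (b :: vs)) hb) ?_
      exact Finset.subset_union_right
    exact ⟨b, hsub hb1, hbt, ih (b :: vs) hsub2⟩

noncomputable def Pfun : ℕ → ℕ → ℕ
  | 0, _ => 1
  | k+1, s => (1 + (TSp k s).card) * Pfun k (s+1)

lemma Pfun_pos : ∀ k s, 1 ≤ Pfun k s := by
  intro k
  induction k with
  | zero => intro s; exact le_refl 1
  | succ k ih =>
    intro s
    exact Nat.one_le_iff_ne_zero.mpr (Nat.mul_ne_zero (by omega) (Nat.one_le_iff_ne_zero.mp (ih (s+1))))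

lemma bset_card (r : V → V → Prop) :
    ∀ (k : ℕ) (vs : List V), (Bset r k vs).card + 1 ≤ Pfun k vs.length := by
  intro k
  induction k with
  | zero => intro vs; simp [Bset, Pfun]
  | succ k ih =>
    intro vs
    set R := (reps r k vs).card with hR
    set T := (TSp k vs.length).card with hT
    set P := Pfun k (vs.length + 1) with hP
    have hPpos : 1 ≤ P := Pfun_pos k (vs.length + 1)
    have hRT : R ≤ T := by
      rw [hR, hT]
      refine le_trans Finset.card_image_le (Finset.card_le_card ?_)
      intro τ hτ
      rcases Finset.mem_image.mp hτ with ⟨a, _, rfl⟩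
      exact tty_mem_TSp r k a vs
    have hbi : ((reps r k vs).biUnion (fun b => Bset r k (b :: vs))).card ≤ R * (P - 1) := by
      refine le_trans Finset.card_biUnion_le ?_
      have := Finset.sum_le_card_nsmul (reps r k vs) (fun b => (Bset r k (b :: vs)).card) (P - 1)
        (by
          intro b _
          show (Bset r k (b :: vs)).card ≤ P - 1
          have := ih (b :: vs)
          simp only [List.length_cons] at this
          omega)
      simpa [smul_eq_mul] using this
    have hcard : (Bset r (k+1) vs).card ≤ R + R * (P - 1) := by
      refine le_trans (Finset.card_union_le _ _) ?_
      omega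
    have hRP : R + R * (P - 1) = R * P := by
      have h1 : R * P = R * ((P - 1) + 1) := by rw [Nat.sub_add_cancel hPpos]
      rw [h1, Nat.mul_add, Nat.mul_one]
      omega
    have hRPle : R * P ≤ T * P := Nat.mul_le_mul_right P hRT
    show (Bset r (k+1) vs).card + 1 ≤ (1 + T) * P
    have hTP : (1 + T) * P = P + T * P := by ring
    omega

lemma pfun_bound : ∀ (k s A : ℕ), 2 ^ (6 * (s + k) + 2) ≤ A → Pfun k s ≤ Rfun k A := by
  intro k
  induction k with
  | zero => intro s A _; exact le_refl 1
  | succ k ih =>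
    intro s A hA
    show (1 + (TSp k s).card) * Pfun k (s+1) ≤ expIter k A * Rfun k A
    have hA' : 2 ^ (6 * (s + 1 + k) + 2) ≤ A := by
      have : 6 * (s + 1 + k) + 2 = 6 * (s + (k+1)) + 2 := by omega
      rw [this]; exact hA
    have hf2 : Pfun k (s+1) ≤ Rfun k A := ih (s+1) A hA'
    have hf1 : 1 + (TSp k s).card ≤ expIter k A := by
      set T := (TSp k s).card with hT
      have hTpos : 1 ≤ T := TSp_card_pos k s
      have h1 : 1 + T ≤ T * 2 ^ (3 * s + 1) := by
        have h2 : 2 ≤ 2 ^ (3 * s + 1) := by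
          calc 2 = 2 ^ 1 := by norm_num
            _ ≤ 2 ^ (3 * s + 1) := Nat.pow_le_pow_right (by norm_num) (by omega)
        calc 1 + T ≤ 2 * T := by omega
          _ = T * 2 := by ring
          _ ≤ T * 2 ^ (3 * s + 1) := Nat.mul_le_mul_left _ h2
      refine le_trans h1 (le_trans (tc_bound k s) (expIter_mono k ?_))
      refine le_trans (Nat.pow_le_pow_right (by norm_num) (by omega : 6 * (s + k) + 2 ≤ 6 * (s + (k+1)) + 2)) hA
    exact Nat.mul_le_mul hf1 hf2

/-- main transfer lemma: Λ_{1/2} formulas transfer from `G` to the induced substructure on `S` -/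
lemma transfer (r : V → V → Prop) (S : Finset V) (d₀ : V) (hd₀ : d₀ ∈ S) :
    ∀ (φ : Fml), φ.NegAtomic → GoodL φ → ∀ (k : ℕ), φ.depth ≤ k →
    ∀ (is : List ℕ) (vsW : List {x // x ∈ S}),
      vsW.length = is.length → φ.freeVars ⊆ is.toFinset →
      Cl r S k (vsW.map Subtype.val) →
      φ.eval r (interp d₀ is (vsW.map Subtype.val)) →
      φ.eval (fun a b : {x // x ∈ S} => r a.1 b.1) (interp ⟨d₀, hd₀⟩ is vsW) := by
  have interp_map : ∀ (is : List ℕ) (vsW : List {x // x ∈ S}),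
      interp d₀ is (vsW.map Subtype.val) = fun i => (interp ⟨d₀, hd₀⟩ is vsW i).1 := by
    intro is vsW
    funext i
    show (vsW.map Subtype.val).getD (is.idxOf i) d₀ = (vsW.getD (is.idxOf i) ⟨d₀, hd₀⟩).1
    exact List.getD_map vsW ⟨d₀, hd₀⟩ Subtype.val
  intro φ
  induction φ with
  | eq i j =>
    intro _ _ k _ is vsW _ _ _ h
    rw [interp_map] at h
    exact Subtype.ext h
  | rel i j =>
    intro _ _ k _ is vsW _ _ _ h
    rw [interp_map] at h
    exact h
  | not θ ihθ =>
    intro hna _ k _ is vsW _ _ _ h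
    cases θ with
    | eq i j =>
      intro he
      rw [interp_map] at h
      exact h (congrArg Subtype.val he)
    | rel i j =>
      rw [interp_map] at h
      exact h
    | not θ' => exact hna.elim
    | and _ _ => exact hna.elim
    | or _ _ => exact hna.elim
    | all _ _ => exact hna.elim
    | ex _ _ => exact hna.elim
  | and θ₁ θ₂ ih1 ih2 =>
    intro hna hg k hk is vsW h1 hfv hcl h
    simp only [depth, max_le_iff] at hk
    simp only [freeVars] at hfv
    exact ⟨ih1 hna.1 hg.1 k hk.1 is vsW h1 (le_trans Finset.subset_union_left hfv) hcl h.1,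
      ih2 hna.2 hg.2 k hk.2 is vsW h1 (le_trans Finset.subset_union_right hfv) hcl h.2⟩
  | or θ₁ θ₂ ih1 ih2 =>
    intro hna hg k hk is vsW h1 hfv hcl h
    simp only [depth, max_le_iff] at hk
    simp only [freeVars] at hfv
    rcases h with h | h
    · exact Or.inl (ih1 hna.1 hg.1 k hk.1 is vsW h1 (le_trans Finset.subset_union_left hfv) hcl h)
    · exact Or.inr (ih2 hna.2 hg.2 k hk.2 is vsW h1 (le_trans Finset.subset_union_right hfv) hcl h)
  | ex i ψ ihψ =>
    intro hna hg k hk is vsW h1 hfv hcl h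
    obtain ⟨k', rfl⟩ : ∃ k'', k = k'' + 1 := by
      have : 1 ≤ k := le_trans (by simp [depth]) hk
      exact ⟨k - 1, by omega⟩
    have hdψ : ψ.depth ≤ k' := by
      have : ψ.depth + 1 ≤ k' + 1 := hk
      omega
    have hfvψ : ψ.freeVars ⊆ (i :: is).toFinset := by
      rw [List.toFinset_cons]
      exact Finset.subset_insert_iff.mpr (by simpa [freeVars] using hfv)
    obtain ⟨a, ha⟩ := h
    rw [interp_update] at ha
    obtain ⟨b, hbS, hbt, hbcl⟩ := hcl a
    have hfam : ∀ j, tty r (k'+j) ((a :: vsW.map Subtype.val).drop j) =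
        tty r (k'+j) ((b :: vsW.map Subtype.val).drop j) := by
      intro j
      cases j with
      | zero => simpa using hbt.symm
      | succ j' => rfl
    have ha' := (t_lemma r d₀ ψ k' hdψ (i :: is) (a :: vsW.map Subtype.val)
      (b :: vsW.map Subtype.val) (by simp [h1]) (by simp [h1]) hfvψ hfam).mp ha
    have hmap : (⟨b, hbS⟩ :: vsW).map Subtype.val = b :: vsW.map Subtype.val := rfl
    have := ihψ hna hg k' hdψ (i :: is) (⟨b, hbS⟩ :: vsW) (by simp [h1]) hfvψ
      (by rw [hmap]; exact hbcl) (by rw [hmap]; exact ha')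
    exact ⟨⟨b, hbS⟩, by rw [interp_update]; exact this⟩
  | all i ψ ihψ =>
    intro hna hg k hk is vsW h1 hfv hcl h
    intro w
    have hw := h w.1
    apply preserve_univ r S ψ hna hg
    have hfe : (fun j => ((Function.update (interp ⟨d₀, hd₀⟩ is vsW) i w) j).1) =
        Function.update (fun j => ((interp ⟨d₀, hd₀⟩ is vsW) j).1) i w.1 := by
      funext j
      by_cases hj : j = i
      · subst hj; simp [Function.update]
      · simp [Function.update, hj]
    rw [hfe, ← interp_map]
    exact hw

end Statement12Aux6


theorem statement_12 {V : Type} [Fintype V] [Nonempty V] (r : V → V → Prop)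
    (φ : Fml) (hφ : Lambda12 φ) (hdef : DDefines r φ) :
    logStar (Fintype.card V) ≤ φ.depth + logStar (logStar (Fintype.card V)) + 1 := by
  classical
  by_contra hcon
  push_neg at hcon
  set n := Fintype.card V with hn
  set L := logStar n with hL
  set d := φ.depth with hd
  have hd1 : 1 ≤ d := one_le_depth_of_sentence φ hdef.1
  have hnpos : 1 ≤ n := Fintype.card_pos
  have hLd : d + logStar L + 2 ≤ L := by omega
  set v₀ : V := Classical.arbitrary V with hv₀
  set S : Finset V := insert v₀ (Bset r d []) with hS
  have hd₀ : v₀ ∈ S := Finset.mem_insert_self _ _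
  letI instW : Fintype {x // x ∈ S} := FinsetCoe.fintype S
  have hNW : Nonempty {x // x ∈ S} := ⟨⟨v₀, hd₀⟩⟩
  set r' : {x // x ∈ S} → {x // x ∈ S} → Prop := fun a b => r a.1 b.1 with hr'
  have hGood := goodL_of_lcond φ hφ.2
  have hNA := hφ.1
  have hclB : Cl r S d ([] : List V) :=
    cl_of_subset r S d [] (by rw [hS]; exact Finset.subset_insert _ _)
  have hfve : φ.freeVars ⊆ ([] : List ℕ).toFinset := by
    rw [hdef.1]
    exact Finset.empty_subset _
  have hev : φ.eval r (interp v₀ [] []) := hdef.2.1 _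
  have hevW : φ.eval r' (interp (⟨v₀, hd₀⟩ : {x // x ∈ S}) [] []) :=
    transfer r S v₀ hd₀ φ hNA hGood d le_rfl [] [] rfl hfve hclB hev
  have hmodels : DModels r' φ := by
    intro σ
    refine (eval_congr r' φ σ (interp (⟨v₀, hd₀⟩ : {x // x ∈ S}) [] []) ?_).mpr hevW
    intro i hi
    rw [hdef.1] at hi
    cases hi
  have hdiso : DIso r r' := by
    by_contra hniso
    exact hdef.2.2 _ instW hNW r' hniso hmodels
  obtain ⟨e, _⟩ := hdiso
  have hcard : n = S.card := by
    rw [hn, Fintype.card_congr e, Fintype.card_coe]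
  have hsize : n ≤ Pfun d 0 := by
    rw [hcard]
    have h1 : S.card ≤ (Bset r d []).card + 1 := by
      rw [hS]; exact Finset.card_insert_le _ _
    have h2 := bset_card r d ([] : List V)
    simp only [List.length_nil] at h2
    omega
  set A := 2 ^ (6 * d + 2) with hA
  have hA2 : 2 ≤ A := by
    rw [hA]
    calc (2:ℕ) = 2 ^ 1 := by norm_num
      _ ≤ 2 ^ (6*d+2) := Nat.pow_le_pow_right (by norm_num) (by omega)
  have hPR : Pfun d 0 ≤ Rfun d A := by
    refine pfun_bound d 0 A ?_
    rw [hA]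
    exact Nat.pow_le_pow_right (by norm_num) (by omega)
  have hRE : Rfun d A ≤ expIter (d-1) (A^2) := by
    have h := rfun_bound hA2 (d-1)
    rw [show d - 1 + 1 = d from by omega] at h
    exact h
  have hEE : expIter (d-1) (A^2) = expIter d (12*d+4) := by
    have hA2eq : A ^ 2 = 2 ^ (12*d + 4) := by
      rw [hA, ← pow_mul]
      congr 1
      ring
    rw [hA2eq, expIter_two_pow, show d - 1 + 1 = d from by omega]
  have htLd : 2 ^ (d + 4) ≤ tower (L - d) := by
    have h1 : logStar L + 2 ≤ L - d := by omega
    have h2 : tower (logStar L + 2) ≤ tower (L - d) := tower_mono h1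
    have h3 : L < tower (logStar L + 1) := lt_tower_logStar L
    have h4 : tower (logStar L + 2) = 2 ^ tower (logStar L + 1) := rfl
    have h5 : d + 4 ≤ tower (logStar L + 1) := by
      have hlogL1 : 1 ≤ logStar L := logStar_one_le (by omega)
      omega
    have h6 : 2 ^ (d+4) ≤ 2 ^ tower (logStar L + 1) := Nat.pow_le_pow_right (by norm_num) h5
    omega
  have hfinal : expIter d (12*d+4) < tower L := by
    have h1 : 12*d + 4 < tower (L - d) := lt_of_lt_of_le (twelve_d_bound d) htLd
    have h2 : expIter d (12*d+4) < expIter d (tower (L-d)) := expIter_lt d h1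
    have h3 : tower L = expIter d (tower (L - d)) := by
      rw [← tower_add (L-d) d, show L - d + d = L from by omega]
    omega
  have htLn : tower L ≤ n := tower_logStar_le hnpos
  omega


end PaperFO
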